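/- If X and Y are nearly compact spaces and W is a cover of X × Y by regular open sets, then there exist a finite cover U of X by regular open subsets of X and a finite cover V of Y by regular open subsets of Y such that the cover {U_i × V_j} refines into W, i.e., each U_i × V_j is contained in some element of W. -/

import Mathlib

def IsRegOpen {X : Type*} [TopologicalSpace X] (A : Set X) : Prop :=
  A = interior (closure A)

def NearlyCompact (X : Type*) [TopologicalSpace X] : Prop :=
  ∀ 𝒰 : Set (Set X), (∀ U ∈ 𝒰, IsRegOpen U) → ⋃₀ 𝒰 = Set.univ →
    ∃ F ⊆ 𝒰, F.Finite ∧ ⋃₀ F = Set.univ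

lemma IsRegOpen.isOpen' {X : Type*} [TopologicalSpace X] {A : Set X} (h : IsRegOpen A) :
    IsOpen A := h ▸ isOpen_interior

lemma isRegOpen_univ {X : Type*} [TopologicalSpace X] : IsRegOpen (Set.univ : Set X) := by
  simp [IsRegOpen]

lemma isRegOpen_intCl {X : Type*} [TopologicalSpace X] (A : Set X) :
    IsRegOpen (interior (closure A)) := by
  unfold IsRegOpen
  apply subset_antisymm
  · exact isOpen_interior.subset_interior_iff.mpr subset_closure
  · have h : closure (interior (closure A)) ⊆ closure A := by
      simpa using closure_mono (interior_subset (s := closure A))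
    exact interior_mono h

lemma IsRegOpen.inter {X : Type*} [TopologicalSpace X] {A B : Set X}
    (hA : IsRegOpen A) (hB : IsRegOpen B) : IsRegOpen (A ∩ B) := by
  unfold IsRegOpen
  apply subset_antisymm
  · exact (hA.isOpen'.inter hB.isOpen').subset_interior_iff.mpr subset_closure
  · have h1 : interior (closure (A ∩ B)) ⊆ interior (closure A) :=
      interior_mono (closure_mono Set.inter_subset_left)
    have h2 : interior (closure (A ∩ B)) ⊆ interior (closure B) :=
      interior_mono (closure_mono Set.inter_subset_right)
    rw [← hA] at h1
    rw [← hB] at h2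
    exact Set.subset_inter h1 h2

lemma isRegOpen_biInter {α X : Type*} [TopologicalSpace X] {s : Set α} (hs : s.Finite)
    {f : α → Set X} (hf : ∀ a ∈ s, IsRegOpen (f a)) : IsRegOpen (⋂ a ∈ s, f a) := by
  revert hf
  refine Set.Finite.induction_on (motive := fun s _ =>
    (∀ a ∈ s, IsRegOpen (f a)) → IsRegOpen (⋂ a ∈ s, f a)) _ hs ?_ ?_
  · intro _; simpa using isRegOpen_univ
  · intro a s ha hsf ih hf
    rw [Set.biInter_insert]
    exact (hf a (Set.mem_insert _ _)).inter (ih fun b hb => hf b (Set.mem_insert_of_mem _ hb))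

lemma combine {X Y : Type*} [TopologicalSpace X] {Q : Set X → Set Y → Prop}
    (hQ : ∀ ⦃U U' : Set X⦄ ⦃v : Set Y⦄, U' ⊆ U → Q U v → Q U' v)
    {S : Set (Set Y)} (hS : S.Finite)
    (h : ∀ v ∈ S, ∃ G : Set (Set X), G.Finite ∧ (∀ U ∈ G, IsRegOpen U) ∧
        ⋃₀ G = Set.univ ∧ ∀ U ∈ G, Q U v) :
    ∃ 𝒰 : Set (Set X), 𝒰.Finite ∧ (∀ U ∈ 𝒰, IsRegOpen U) ∧ ⋃₀ 𝒰 = Set.univ ∧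
      ∀ U ∈ 𝒰, ∀ v ∈ S, Q U v := by
  revert h
  refine Set.Finite.induction_on (motive := fun S _ =>
    (∀ v ∈ S, ∃ G : Set (Set X), G.Finite ∧ (∀ U ∈ G, IsRegOpen U) ∧
        ⋃₀ G = Set.univ ∧ ∀ U ∈ G, Q U v) →
    ∃ 𝒰 : Set (Set X), 𝒰.Finite ∧ (∀ U ∈ 𝒰, IsRegOpen U) ∧ ⋃₀ 𝒰 = Set.univ ∧
      ∀ U ∈ 𝒰, ∀ v ∈ S, Q U v) _ hS ?_ ?_
  · intro _
    exact ⟨{Set.univ}, Set.finite_singleton _,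
      by rintro U rfl; exact isRegOpen_univ, by simp, by simp⟩
  · intro a s ha hsf ih h
    obtain ⟨𝒰', h𝒰fin, h𝒰reg, h𝒰cov, h𝒰Q⟩ :=
      ih fun v hv => h v (Set.mem_insert_of_mem _ hv)
    obtain ⟨G, hGfin, hGreg, hGcov, hGQ⟩ := h a (Set.mem_insert _ _)
    refine ⟨Set.image2 (· ∩ ·) 𝒰' G, h𝒰fin.image2 _ hGfin, ?_, ?_, ?_⟩
    · rintro U hU
      obtain ⟨A, hA, B, hB, rfl⟩ := hU
      exact (h𝒰reg A hA).inter (hGreg B hB)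
    · apply Set.eq_univ_of_forall
      intro x
      have hx1 : x ∈ ⋃₀ 𝒰' := h𝒰cov ▸ Set.mem_univ x
      have hx2 : x ∈ ⋃₀ G := hGcov ▸ Set.mem_univ x
      obtain ⟨A, hA, hxA⟩ := hx1
      obtain ⟨B, hB, hxB⟩ := hx2
      exact ⟨A ∩ B, Set.mem_image2_of_mem hA hB, hxA, hxB⟩
    · rintro U hU v hv
      obtain ⟨A, hA, B, hB, rfl⟩ := hU
      rcases hv with rfl | hv
      · exact hQ Set.inter_subset_right (hGQ B hB)
      · exact hQ Set.inter_subset_left (h𝒰Q A hA v hv)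

theorem prod_cover_refinement {X Y : Type*} [TopologicalSpace X] [TopologicalSpace Y]
    (hX : NearlyCompact X) (hY : NearlyCompact Y)
    (𝒲 : Set (Set (X × Y))) (h𝒲reg : ∀ W ∈ 𝒲, IsRegOpen W) (h𝒲cov : ⋃₀ 𝒲 = Set.univ) :
    ∃ 𝒰 : Set (Set X), ∃ 𝒱 : Set (Set Y),
      𝒰.Finite ∧ (∀ U ∈ 𝒰, IsRegOpen U) ∧ ⋃₀ 𝒰 = Set.univ ∧
      𝒱.Finite ∧ (∀ V ∈ 𝒱, IsRegOpen V) ∧ ⋃₀ 𝒱 = Set.univ ∧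
      ∀ U ∈ 𝒰, ∀ V ∈ 𝒱, ∃ W ∈ 𝒲, U ×ˢ V ⊆ W := by
  classical
  -- Step A: around each point, a regular-open box inside some W
  have stepA : ∀ (x : X) (y : Y), ∃ U V, IsRegOpen U ∧ IsRegOpen V ∧ x ∈ U ∧ y ∈ V ∧
      ∃ W ∈ 𝒲, U ×ˢ V ⊆ W := by
    intro x y
    have hxy : (x, y) ∈ ⋃₀ 𝒲 := h𝒲cov ▸ Set.mem_univ _
    obtain ⟨W, hW, hmem⟩ := hxy
    obtain ⟨u, v, hu, hv, hxu, hyv, huv⟩ :=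
      (isOpen_prod_iff.mp (h𝒲reg W hW).isOpen') x y hmem
    refine ⟨interior (closure u), interior (closure v), isRegOpen_intCl _, isRegOpen_intCl _,
      (hu.subset_interior_iff.mpr subset_closure) hxu,
      (hv.subset_interior_iff.mpr subset_closure) hyv, W, hW, ?_⟩
    calc interior (closure u) ×ˢ interior (closure v)
        = interior (closure (u ×ˢ v)) := by rw [closure_prod_eq, interior_prod_eq]
      _ ⊆ interior (closure W) := interior_mono (closure_mono huv)
      _ = W := (h𝒲reg W hW).symm
  choose U V hUreg hVreg hxU hyV hUVW using stepA
  -- Step B: for each y, a regular-open V ∋ y and a finite regular-open cover G of X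
  -- such that every member of G paired with V sits inside some W
  have stepB : ∀ y : Y, ∃ (v : Set Y) (G : Set (Set X)), IsRegOpen v ∧ y ∈ v ∧
      G.Finite ∧ (∀ u ∈ G, IsRegOpen u) ∧ ⋃₀ G = Set.univ ∧
      ∀ u ∈ G, ∃ W ∈ 𝒲, u ×ˢ v ⊆ W := by
    intro y
    cases isEmpty_or_nonempty X with
    | inl hE =>
      refine ⟨Set.univ, ∅, isRegOpen_univ, Set.mem_univ y, Set.finite_empty, ?_, ?_, ?_⟩
      · simp
      · simp [Set.eq_empty_of_isEmpty (Set.univ : Set X)]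
      · simp
    | inr hNE =>
    have hcov : ⋃₀ {s : Set X | ∃ x, s = U x y} = Set.univ := by
      apply Set.eq_univ_of_forall
      intro x
      exact ⟨U x y, ⟨x, rfl⟩, hxU x y⟩
    obtain ⟨F, hFsub, hFfin, hFcov⟩ := hX {s | ∃ x, s = U x y}
      (by rintro s ⟨x, rfl⟩; exact hUreg x y) hcov
    have hξ : ∀ u ∈ F, ∃ x, u = U x y := fun u hu => hFsub hu
    choose! ξ hξ using hξ
    refine ⟨⋂ u ∈ F, V (ξ u) y, F, isRegOpen_biInter hFfin (fun u _ => hVreg _ _), ?_,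
      hFfin, (by rintro u hu; rw [hξ u hu]; exact hUreg _ _), hFcov, ?_⟩
    · exact Set.mem_biInter fun u _ => hyV _ _
    · intro u hu
      obtain ⟨W, hW, hsub⟩ := hUVW (ξ u) y
      refine ⟨W, hW, ?_⟩
      refine Set.Subset.trans (Set.prod_mono ?_ ?_) hsub
      · exact (hξ u hu).le
      · exact Set.biInter_subset_of_mem hu
  choose Vf Gf hVfreg hyVf hGffin hGfreg hGfcov hGfQ using stepB
  -- Cover Y by the Vf's, take finite subcover
  have hcovY : ⋃₀ {v : Set Y | ∃ y, v = Vf y} = Set.univ := by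
    apply Set.eq_univ_of_forall
    intro y
    exact ⟨Vf y, ⟨y, rfl⟩, hyVf y⟩
  obtain ⟨FV, hFVsub, hFVfin, hFVcov⟩ := hY {v | ∃ y, v = Vf y}
    (by rintro v ⟨y, rfl⟩; exact hVfreg y) hcovY
  -- Combine the covers of X associated to each member of FV
  have hcomb := combine (X := X) (Y := Y) (Q := fun u v => ∃ W ∈ 𝒲, u ×ˢ v ⊆ W)
    (fun u u' v huu' ⟨W, hW, hsub⟩ => ⟨W, hW, (Set.prod_mono huu' le_rfl).trans hsub⟩)
    hFVfin
    (by
      rintro v hv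
      obtain ⟨y, rfl⟩ := hFVsub hv
      exact ⟨Gf y, hGffin y, hGfreg y, hGfcov y, hGfQ y⟩)
  obtain ⟨𝒰, h𝒰fin, h𝒰reg, h𝒰cov, h𝒰Q⟩ := hcomb
  exact ⟨𝒰, FV, h𝒰fin, h𝒰reg, h𝒰cov, hFVfin,
    (by rintro v hv; obtain ⟨y, rfl⟩ := hFVsub hv; exact hVfreg y), hFVcov, h𝒰Q⟩
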